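/- Let (Ω, 𝓕, P) be a probability space and for each n ≥ 1 let X_n : Ω → ℝ^n be a random vector whose law is the uniform (rotation-invariant) probability measure on the unit sphere S^{n−1} ⊂ ℝ^n, and let Y_n : Ω → ℝ^n be a random vector with ‖Y_n‖₂ = 1 almost surely that is independent of X_n. Then X_nᵀ Y_n → 0 almost surely as n → ∞. -/

import Mathlib

open Filter MeasureTheory ProbabilityTheory
open scoped Topology ENNReal

namespace DB12
variable {Ω : Type} [MeasurableSpace Ω] {n : ℕ}

lemma sum_two [NeZero n] (f : Fin n → ℝ) (a b : ℝ)
    (hf : ∀ j, f j = (if j = 0 then a else 0) + (if j = 1 then b else 0)) :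
    ∑ j, f j = a + b := by
  rw [Finset.sum_congr rfl fun j _ => hf j, Finset.sum_add_distrib]
  simp [Finset.sum_ite_eq']

lemma zero_ne_one_fin (h2 : 2 ≤ n) [NeZero n] : (0 : Fin n) ≠ 1 := by
  have h1 : ((1:Fin n) : ℕ) = 1 % n := Fin.val_one' n
  intro h
  have h0 : ((0:Fin n) : ℕ) = 0 := rfl
  rw [h, h1] at h0
  rw [Nat.mod_eq_of_lt (by omega)] at h0
  omega

lemma measurable_mulVecc {X : Ω → Fin n → ℝ} (hX : Measurable X)
    (A : Matrix (Fin n) (Fin n) ℝ) : Measurable fun ω => A.mulVec (X ω) := by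
  apply measurable_pi_lambda
  intro i
  simp only [Matrix.mulVec, dotProduct]
  exact Finset.measurable_sum _ fun j _ =>
    measurable_const.mul ((measurable_pi_apply j).comp hX)

lemma transfer (P : Measure Ω) {X : Ω → Fin n → ℝ} (hX : Measurable X)
    {A : Matrix (Fin n) (Fin n) ℝ}
    (hA : P.map (fun ω => A.mulVec (X ω)) = P.map X)
    {g : (Fin n → ℝ) → ℝ≥0∞} (hg : Measurable g) :
    ∫⁻ ω, g (A.mulVec (X ω)) ∂P = ∫⁻ ω, g (X ω) ∂P := by
  rw [← lintegral_map hg (measurable_mulVecc hX A), hA, lintegral_map hg hX]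

lemma exists_orthogonal (s : Set (Fin n)) (v : Fin n → EuclideanSpace ℝ (Fin n))
    (hv : ∀ i ∈ s, ∀ k ∈ s, ∑ j, v i j * v k j = if i = k then 1 else 0) :
    ∃ A : Matrix (Fin n) (Fin n) ℝ, A * A.transpose = 1 ∧
      ∀ i ∈ s, ∀ x : Fin n → ℝ, A.mulVec x i = ∑ j, v i j * x j := by
  have hon : Orthonormal ℝ (s.restrict v) := by
    rw [orthonormal_iff_ite]
    rintro ⟨i, hi⟩ ⟨k, hk⟩
    have h := hv i hi k hk
    simp only [Set.restrict_apply, PiLp.inner_apply, RCLike.inner_apply, conj_trivial]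
    rw [show (∑ x, (s.restrict v ⟨k, hk⟩).ofLp x * (s.restrict v ⟨i, hi⟩).ofLp x)
        = ∑ j, (v i).ofLp j * (v k).ofLp j from Finset.sum_congr rfl fun j _ => mul_comm _ _, h]
    simp [Subtype.ext_iff]
  obtain ⟨b, hb⟩ := hon.exists_orthonormalBasis_extension_of_card_eq (by simp)
  refine ⟨Matrix.of fun i j => b i j, ?_, ?_⟩
  · ext i k
    have h := orthonormal_iff_ite.mp b.orthonormal i k
    simp only [PiLp.inner_apply, RCLike.inner_apply, conj_trivial] at h
    simpa [Matrix.mul_apply, Matrix.one_apply, mul_comm] using h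
  · intro i hi x
    simp only [Matrix.mulVec, dotProduct, Matrix.of_apply, hb i hi]

variable (P : Measure Ω) [IsProbabilityMeasure P] {X : Ω → Fin n → ℝ}

lemma coord_fourth [NeZero n] (hX : Measurable X)
    (hinv : ∀ A : Matrix (Fin n) (Fin n) ℝ, A * A.transpose = 1 →
      P.map (fun ω => A.mulVec (X ω)) = P.map X) (i : Fin n) :
    ∫⁻ ω, ENNReal.ofReal (X ω i ^ 4) ∂P = ∫⁻ ω, ENNReal.ofReal (X ω 0 ^ 4) ∂P := by
  obtain ⟨A, hA, hrow⟩ := exists_orthogonal {0}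
    (fun _ => (EuclideanSpace.single i 1 : EuclideanSpace ℝ (Fin n)))
    (by
      intro a ha b hb
      simp only [Set.mem_singleton_iff] at ha hb
      subst ha; subst hb
      simp [EuclideanSpace.single_apply, Finset.sum_ite_eq'])
  have hg : Measurable fun v : Fin n → ℝ => ENNReal.ofReal (v 0 ^ 4) :=
    ((measurable_pi_apply 0).pow_const 4).ennreal_ofReal
  have ht := transfer P hX (hinv A hA) hg
  have hcoord : ∀ ω, (A.mulVec (X ω)) 0 = X ω i := by
    intro ω
    rw [hrow 0 rfl (X ω)]
    simp [EuclideanSpace.single_apply, Finset.sum_ite_eq']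
  calc ∫⁻ ω, ENNReal.ofReal (X ω i ^ 4) ∂P
      = ∫⁻ ω, ENNReal.ofReal ((A.mulVec (X ω)) 0 ^ 4) ∂P := by
        exact lintegral_congr fun ω => by rw [hcoord ω]
    _ = ∫⁻ ω, ENNReal.ofReal (X ω 0 ^ 4) ∂P := ht

lemma coord_sq_sq [NeZero n] (hX : Measurable X)
    (hinv : ∀ A : Matrix (Fin n) (Fin n) ℝ, A * A.transpose = 1 →
      P.map (fun ω => A.mulVec (X ω)) = P.map X) {i j : Fin n} (hij : i ≠ j) :
    ∫⁻ ω, ENNReal.ofReal (X ω i ^ 2 * X ω j ^ 2) ∂P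
      = ∫⁻ ω, ENNReal.ofReal (X ω 0 ^ 2 * X ω 1 ^ 2) ∂P := by
  have hnt : Nontrivial (Fin n) := ⟨⟨i, j, hij⟩⟩
  have h2 : 2 ≤ n := by
    have := Fintype.one_lt_card (α := Fin n)
    simp at this; omega
  have h01 : (0 : Fin n) ≠ 1 := zero_ne_one_fin h2
  have key : ∀ u w : Fin n,
      (∑ l, (EuclideanSpace.single u (1:ℝ) : EuclideanSpace ℝ (Fin n)) l *
        (EuclideanSpace.single w (1:ℝ) : EuclideanSpace ℝ (Fin n)) l)
      = if u = w then 1 else 0 := by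
    intro u w
    simp [EuclideanSpace.single_apply, Finset.sum_ite_eq', mul_ite, ite_and, eq_comm]
  obtain ⟨A, hA, hrow⟩ := exists_orthogonal {0, 1}
    (fun k => if k = (0:Fin n) then (EuclideanSpace.single i 1 : EuclideanSpace ℝ (Fin n))
      else EuclideanSpace.single j 1)
    (by
      intro a ha b hb
      simp only [Set.mem_insert_iff, Set.mem_singleton_iff] at ha hb
      rcases ha with rfl | rfl <;> rcases hb with rfl | rfl <;>
        simp only [if_pos rfl, if_neg (Ne.symm h01), key] <;>
        simp [hij, hij.symm, h01, Ne.symm h01])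
  have hg : Measurable fun v : Fin n → ℝ => ENNReal.ofReal (v 0 ^ 2 * v 1 ^ 2) :=
    (((measurable_pi_apply 0).pow_const 2).mul ((measurable_pi_apply 1).pow_const 2)).ennreal_ofReal
  have ht := transfer P hX (hinv A hA) hg
  have hc0 : ∀ ω, (A.mulVec (X ω)) 0 = X ω i := by
    intro ω
    rw [hrow 0 (by simp) (X ω)]
    simp [EuclideanSpace.single_apply, Finset.sum_ite_eq']
  have hc1 : ∀ ω, (A.mulVec (X ω)) 1 = X ω j := by
    intro ω
    rw [hrow 1 (by simp) (X ω)]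
    simp [if_neg (Ne.symm h01), EuclideanSpace.single_apply, Finset.sum_ite_eq', show n ≠ 1 by omega]
  calc ∫⁻ ω, ENNReal.ofReal (X ω i ^ 2 * X ω j ^ 2) ∂P
      = ∫⁻ ω, ENNReal.ofReal ((A.mulVec (X ω)) 0 ^ 2 * (A.mulVec (X ω)) 1 ^ 2) ∂P :=
        lintegral_congr fun ω => by rw [hc0 ω, hc1 ω]
    _ = ∫⁻ ω, ENNReal.ofReal (X ω 0 ^ 2 * X ω 1 ^ 2) ∂P := ht

lemma fourth_le_one [NeZero n] (hsphere : ∀ᵐ ω ∂P, ∑ i, X ω i ^ 2 = 1) :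
    ∫⁻ ω, ENNReal.ofReal (X ω 0 ^ 4) ∂P ≤ 1 := by
  have h : ∀ᵐ ω ∂P, ENNReal.ofReal (X ω 0 ^ 4) ≤ 1 := by
    filter_upwards [hsphere] with ω hω
    have h0 : X ω 0 ^ 2 ≤ 1 := by
      rw [← hω]
      exact Finset.single_le_sum (fun i _ => sq_nonneg (X ω i)) (Finset.mem_univ 0)
    have h4 : X ω 0 ^ 4 ≤ 1 := by nlinarith [sq_nonneg (X ω 0)]
    calc ENNReal.ofReal (X ω 0 ^ 4) ≤ ENNReal.ofReal 1 := ENNReal.ofReal_le_ofReal h4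
      _ = 1 := ENNReal.ofReal_one
  calc ∫⁻ ω, ENNReal.ofReal (X ω 0 ^ 4) ∂P ≤ ∫⁻ _, 1 ∂P := lintegral_mono_ae h
    _ = 1 := by simp

lemma sum_two_mul [NeZero n] (h01 : (0:Fin n) ≠ 1) (a b c d : ℝ) :
    ∑ j : Fin n, (((if j = 0 then a else 0) + (if j = 1 then b else 0)) *
      ((if j = 0 then c else 0) + (if j = 1 then d else 0))) = a * c + b * d := by
  have hn1 : n ≠ 1 := fun h => h01 (by subst h; exact Subsingleton.elim _ _)
  apply sum_two
  intro j
  by_cases hj0 : j = 0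
  · subst hj0
    simp [Ne.symm h01, hn1]
  · by_cases hj1 : j = 1 <;> simp [hj0, hj1, hn1]

lemma sum_two_mulr [NeZero n] (h01 : (0:Fin n) ≠ 1) (a b : ℝ) (x : Fin n → ℝ) :
    ∑ j : Fin n, (((if j = 0 then a else 0) + (if j = 1 then b else 0)) * x j)
      = a * x 0 + b * x 1 := by
  have hn1 : n ≠ 1 := fun h => h01 (by subst h; exact Subsingleton.elim _ _)
  apply sum_two
  intro j
  by_cases hj0 : j = 0
  · subst hj0
    simp [Ne.symm h01, hn1]
  · by_cases hj1 : j = 1 <;> simp [hj0, hj1, hn1]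

lemma fourth_eq_three_mul (h2 : 2 ≤ n) [NeZero n] (hX : Measurable X)
    (hsphere : ∀ᵐ ω ∂P, ∑ i, X ω i ^ 2 = 1)
    (hinv : ∀ A : Matrix (Fin n) (Fin n) ℝ, A * A.transpose = 1 →
      P.map (fun ω => A.mulVec (X ω)) = P.map X) :
    ∫⁻ ω, ENNReal.ofReal (X ω 0 ^ 4) ∂P
      = 3 * ∫⁻ ω, ENNReal.ofReal (X ω 0 ^ 2 * X ω 1 ^ 2) ∂P := by
  have h01 : (0 : Fin n) ≠ 1 := zero_ne_one_fin h2
  set s : ℝ := (Real.sqrt 2)⁻¹ with hs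
  have hs2 : s ^ 2 = 1 / 2 := by
    rw [hs, inv_pow, Real.sq_sqrt (by norm_num : (0:ℝ) ≤ 2)]
    norm_num
  have hs4 : s ^ 4 = 1 / 4 := by
    have h : s ^ 4 = (s ^ 2) ^ 2 := by ring
    rw [h, hs2]; norm_num
  obtain ⟨A, hA, hrow⟩ := exists_orthogonal {0, 1}
    (fun k => if k = (0:Fin n)
      then (WithLp.toLp 2 (fun j : Fin n => (if j = 0 then s else 0) + (if j = 1 then s else 0)) : EuclideanSpace ℝ (Fin n))
      else WithLp.toLp 2 (fun j : Fin n => (if j = 0 then -s else 0) + (if j = 1 then s else 0)))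
    (by
      intro a ha b hb
      simp only [Set.mem_insert_iff, Set.mem_singleton_iff] at ha hb
      rcases ha with rfl | rfl <;> rcases hb with rfl | rfl <;>
        simp only [eq_self_iff_true, if_true, if_neg (Ne.symm h01), if_neg h01, WithLp.ofLp_toLp] <;>
        beta_reduce <;>
        rw [sum_two_mul h01] <;>
        first
        | linear_combination 2 * hs2
        | ring)
  have hc0' : Measurable fun ω => X ω 0 := (measurable_pi_apply 0).comp hX
  have hc1' : Measurable fun ω => X ω 1 := (measurable_pi_apply 1).comp hX
  have hg0 : Measurable fun v : Fin n → ℝ => ENNReal.ofReal (v 0 ^ 4) :=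
    ((measurable_pi_apply 0).pow_const 4).ennreal_ofReal
  have hg1 : Measurable fun v : Fin n → ℝ => ENNReal.ofReal (v 1 ^ 4) :=
    ((measurable_pi_apply 1).pow_const 4).ennreal_ofReal
  have hrow0 : ∀ x : Fin n → ℝ, A.mulVec x 0 = s * x 0 + s * x 1 := by
    intro x
    rw [hrow 0 (by simp) x]
    simp only [eq_self_iff_true, if_true]
    exact sum_two_mulr h01 s s x
  have hrow1 : ∀ x : Fin n → ℝ, A.mulVec x 1 = -s * x 0 + s * x 1 := by
    intro x
    rw [hrow 1 (by simp) x]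
    simp only [if_neg (Ne.symm h01)]
    exact sum_two_mulr h01 (-s) s x
  have T0 : ∫⁻ ω, ENNReal.ofReal ((s * X ω 0 + s * X ω 1) ^ 4) ∂P
      = ∫⁻ ω, ENNReal.ofReal (X ω 0 ^ 4) ∂P := by
    rw [← transfer P hX (hinv A hA) hg0]
    exact lintegral_congr fun ω => by rw [hrow0 (X ω)]
  have T1 : ∫⁻ ω, ENNReal.ofReal ((-s * X ω 0 + s * X ω 1) ^ 4) ∂P
      = ∫⁻ ω, ENNReal.ofReal (X ω 0 ^ 4) ∂P := by
    rw [← coord_fourth P hX hinv 1, ← transfer P hX (hinv A hA) hg1]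
    exact lintegral_congr fun ω => by rw [hrow1 (X ω)]
  have key : ∀ a b : ℝ,
      ENNReal.ofReal ((s * a + s * b) ^ 4) + ENNReal.ofReal ((-s * a + s * b) ^ 4)
      = ENNReal.ofReal (a ^ 4) * ENNReal.ofReal (1/2)
        + (ENNReal.ofReal (a ^ 2 * b ^ 2) * ENNReal.ofReal 3
          + ENNReal.ofReal (b ^ 4) * ENNReal.ofReal (1/2)) := by
    intro a b
    rw [← ENNReal.ofReal_mul (by positivity), ← ENNReal.ofReal_mul (by positivity),
      ← ENNReal.ofReal_mul (by positivity),
      ← ENNReal.ofReal_add (by positivity) (by positivity),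
      ← ENNReal.ofReal_add (by positivity) (by positivity),
      ← ENNReal.ofReal_add (by positivity) (by positivity)]
    congr 1
    linear_combination ((a + b) ^ 4 + (b - a) ^ 4) * hs4
  have hma : Measurable fun ω => ENNReal.ofReal ((s * X ω 0 + s * X ω 1) ^ 4) :=
    ((((measurable_const.mul hc0').add (measurable_const.mul hc1'))).pow_const 4).ennreal_ofReal
  have hmb : Measurable fun ω => ENNReal.ofReal ((-s * X ω 0 + s * X ω 1) ^ 4) :=
    ((((measurable_const.mul hc0').add (measurable_const.mul hc1'))).pow_const 4).ennreal_ofReal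
  have hm4 : Measurable fun ω => ENNReal.ofReal (X ω 0 ^ 4) := (hc0'.pow_const 4).ennreal_ofReal
  have hm22 : Measurable fun ω => ENNReal.ofReal (X ω 0 ^ 2 * X ω 1 ^ 2) :=
    ((hc0'.pow_const 2).mul (hc1'.pow_const 2)).ennreal_ofReal
  have hm4' : Measurable fun ω => ENNReal.ofReal (X ω 1 ^ 4) := (hc1'.pow_const 4).ennreal_ofReal
  have big : (∫⁻ ω, ENNReal.ofReal (X ω 0 ^ 4) ∂P) + (∫⁻ ω, ENNReal.ofReal (X ω 0 ^ 4) ∂P)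
      = (∫⁻ ω, ENNReal.ofReal (X ω 0 ^ 4) ∂P) * ENNReal.ofReal (1/2)
        + ((∫⁻ ω, ENNReal.ofReal (X ω 0 ^ 2 * X ω 1 ^ 2) ∂P) * ENNReal.ofReal 3
          + (∫⁻ ω, ENNReal.ofReal (X ω 0 ^ 4) ∂P) * ENNReal.ofReal (1/2)) := by
    calc (∫⁻ ω, ENNReal.ofReal (X ω 0 ^ 4) ∂P) + (∫⁻ ω, ENNReal.ofReal (X ω 0 ^ 4) ∂P)
        = ∫⁻ ω, (ENNReal.ofReal ((s * X ω 0 + s * X ω 1) ^ 4)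
            + ENNReal.ofReal ((-s * X ω 0 + s * X ω 1) ^ 4)) ∂P := by
          rw [lintegral_add_left hma, T0, T1]
      _ = ∫⁻ ω, (ENNReal.ofReal (X ω 0 ^ 4) * ENNReal.ofReal (1/2)
            + (ENNReal.ofReal (X ω 0 ^ 2 * X ω 1 ^ 2) * ENNReal.ofReal 3
              + ENNReal.ofReal (X ω 1 ^ 4) * ENNReal.ofReal (1/2))) ∂P :=
          lintegral_congr fun ω => key (X ω 0) (X ω 1)
      _ = (∫⁻ ω, ENNReal.ofReal (X ω 0 ^ 4) ∂P) * ENNReal.ofReal (1/2)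
          + ((∫⁻ ω, ENNReal.ofReal (X ω 0 ^ 2 * X ω 1 ^ 2) ∂P) * ENNReal.ofReal 3
            + (∫⁻ ω, ENNReal.ofReal (X ω 1 ^ 4) ∂P) * ENNReal.ofReal (1/2)) := by
          rw [lintegral_add_left (hm4.mul_const _),
            lintegral_add_left (hm22.mul_const _),
            lintegral_mul_const _ hm4, lintegral_mul_const _ hm22, lintegral_mul_const _ hm4']
      _ = (∫⁻ ω, ENNReal.ofReal (X ω 0 ^ 4) ∂P) * ENNReal.ofReal (1/2)
          + ((∫⁻ ω, ENNReal.ofReal (X ω 0 ^ 2 * X ω 1 ^ 2) ∂P) * ENNReal.ofReal 3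
            + (∫⁻ ω, ENNReal.ofReal (X ω 0 ^ 4) ∂P) * ENNReal.ofReal (1/2)) := by
          rw [coord_fourth P hX hinv 1]
  have hhalf : ENNReal.ofReal (1/2) + ENNReal.ofReal (1/2) = 1 := by
    rw [← ENNReal.ofReal_add (by norm_num) (by norm_num)]
    norm_num
  have h3 : ENNReal.ofReal 3 = 3 := by
    simp [ENNReal.ofReal_ofNat]
  have big2 : (∫⁻ ω, ENNReal.ofReal (X ω 0 ^ 4) ∂P) + (∫⁻ ω, ENNReal.ofReal (X ω 0 ^ 4) ∂P)
      = (∫⁻ ω, ENNReal.ofReal (X ω 0 ^ 4) ∂P)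
        + 3 * (∫⁻ ω, ENNReal.ofReal (X ω 0 ^ 2 * X ω 1 ^ 2) ∂P) := by
    rw [big, h3]
    calc (∫⁻ ω, ENNReal.ofReal (X ω 0 ^ 4) ∂P) * ENNReal.ofReal (1/2)
        + ((∫⁻ ω, ENNReal.ofReal (X ω 0 ^ 2 * X ω 1 ^ 2) ∂P) * 3
          + (∫⁻ ω, ENNReal.ofReal (X ω 0 ^ 4) ∂P) * ENNReal.ofReal (1/2))
        = (∫⁻ ω, ENNReal.ofReal (X ω 0 ^ 4) ∂P) * (ENNReal.ofReal (1/2) + ENNReal.ofReal (1/2))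
          + 3 * (∫⁻ ω, ENNReal.ofReal (X ω 0 ^ 2 * X ω 1 ^ 2) ∂P) := by ring
      _ = (∫⁻ ω, ENNReal.ofReal (X ω 0 ^ 4) ∂P)
          + 3 * (∫⁻ ω, ENNReal.ofReal (X ω 0 ^ 2 * X ω 1 ^ 2) ∂P) := by rw [hhalf, mul_one]
  have hEtop : (∫⁻ ω, ENNReal.ofReal (X ω 0 ^ 4) ∂P) ≠ ⊤ :=
    ((fourth_le_one P hsphere).trans_lt ENNReal.one_lt_top).ne
  exact (ENNReal.add_right_inj hEtop).mp big2

lemma sq_sum_eq (a : Fin n → ℝ) :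
    (∑ i, a i) ^ 2 = ∑ i, a i ^ 2 + ∑ p ∈ Finset.univ.offDiag, a p.1 * a p.2 := by
  rw [sq, Finset.sum_mul_sum, ← Finset.sum_product', ← Finset.diag_union_offDiag,
    Finset.sum_union (Finset.disjoint_diag_offDiag _), Finset.sum_diag]
  congr 1
  exact Finset.sum_congr rfl fun i _ => (sq (a i)).symm

lemma fourth_moment_eq (h2 : 2 ≤ n) [NeZero n] (hX : Measurable X)
    (hsphere : ∀ᵐ ω ∂P, ∑ i, X ω i ^ 2 = 1)
    (hinv : ∀ A : Matrix (Fin n) (Fin n) ℝ, A * A.transpose = 1 →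
      P.map (fun ω => A.mulVec (X ω)) = P.map X) :
    ((n * n + 2 * n : ℕ) : ℝ≥0∞) * ∫⁻ ω, ENNReal.ofReal (X ω 0 ^ 4) ∂P = 3 := by
  have hc0' : Measurable fun ω => X ω 0 := (measurable_pi_apply 0).comp hX
  -- expectation of (∑ X_i^2)^2 equals 1
  have hone : ∫⁻ ω, ENNReal.ofReal ((∑ i, X ω i ^ 2) ^ 2) ∂P = 1 := by
    have : ∀ᵐ ω ∂P, ENNReal.ofReal ((∑ i, X ω i ^ 2) ^ 2) = 1 := by
      filter_upwards [hsphere] with ω hω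
      rw [hω]; norm_num
    rw [lintegral_congr_ae this]
    simp
  -- pointwise expansion
  have hexp : ∀ ω, ENNReal.ofReal ((∑ i, X ω i ^ 2) ^ 2)
      = ∑ i, ENNReal.ofReal ((X ω i ^ 2) ^ 2)
        + ∑ p ∈ Finset.univ.offDiag, ENNReal.ofReal (X ω p.1 ^ 2 * X ω p.2 ^ 2) := by
    intro ω
    rw [sq_sum_eq (fun i => X ω i ^ 2),
      ENNReal.ofReal_add (by positivity) (Finset.sum_nonneg fun p _ => by positivity),
      ENNReal.ofReal_sum_of_nonneg (fun i _ => by positivity),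
      ENNReal.ofReal_sum_of_nonneg (fun p _ => by positivity)]
  have hmi : ∀ i : Fin n, Measurable fun ω => ENNReal.ofReal ((X ω i ^ 2) ^ 2) :=
    fun i => ((((measurable_pi_apply i).comp hX).pow_const 2).pow_const 2).ennreal_ofReal
  have hmp : ∀ p : Fin n × Fin n, Measurable fun ω => ENNReal.ofReal (X ω p.1 ^ 2 * X ω p.2 ^ 2) :=
    fun p => ((((measurable_pi_apply p.1).comp hX).pow_const 2).mul
      (((measurable_pi_apply p.2).comp hX).pow_const 2)).ennreal_ofReal
  have split : (1 : ℝ≥0∞)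
      = ∑ i : Fin n, ∫⁻ ω, ENNReal.ofReal ((X ω i ^ 2) ^ 2) ∂P
        + ∑ p ∈ Finset.univ.offDiag, ∫⁻ ω, ENNReal.ofReal (X ω p.1 ^ 2 * X ω p.2 ^ 2) ∂P := by
    rw [← hone, lintegral_congr hexp, lintegral_add_left (by
        exact Finset.measurable_sum _ fun i _ => hmi i),
      lintegral_finset_sum _ fun i _ => hmi i, lintegral_finset_sum _ fun p _ => hmp p]
  -- identify each diagonal term with the fourth moment
  have hdiag : ∀ i : Fin n, ∫⁻ ω, ENNReal.ofReal ((X ω i ^ 2) ^ 2) ∂P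
      = ∫⁻ ω, ENNReal.ofReal (X ω 0 ^ 4) ∂P := by
    intro i
    rw [← coord_fourth P hX hinv i]
    exact lintegral_congr fun ω => by rw [← pow_mul]
  have hoff : ∀ p : Fin n × Fin n, p ∈ Finset.univ.offDiag →
      ∫⁻ ω, ENNReal.ofReal (X ω p.1 ^ 2 * X ω p.2 ^ 2) ∂P
      = ∫⁻ ω, ENNReal.ofReal (X ω 0 ^ 2 * X ω 1 ^ 2) ∂P := by
    intro p hp
    exact coord_sq_sq P hX hinv (Finset.mem_offDiag.mp hp).2.2
  rw [Finset.sum_congr rfl (fun i _ => hdiag i), Finset.sum_congr rfl hoff,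
    Finset.sum_const, Finset.sum_const, Finset.card_univ, Fintype.card_fin,
    Finset.offDiag_card, Finset.card_univ, Fintype.card_fin] at split
  rw [fourth_eq_three_mul P h2 hX hsphere hinv] at split
  -- now: 1 = n • (3 * E22) + (n*n - n) • E22
  set E22 := ∫⁻ ω, ENNReal.ofReal (X ω 0 ^ 2 * X ω 1 ^ 2) ∂P with hE22
  have hsmul : ∀ (k : ℕ) (x : ℝ≥0∞), k • x = (k : ℝ≥0∞) * x := fun k x => by
    simp [nsmul_eq_mul]
  rw [hsmul, hsmul] at split
  rw [fourth_eq_three_mul P h2 hX hsphere hinv, ← hE22]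
  calc ((n * n + 2 * n : ℕ) : ℝ≥0∞) * (3 * E22)
      = 3 * ((n : ℝ≥0∞) * (3 * E22) + ((n * n - n : ℕ) : ℝ≥0∞) * E22) := by
        obtain ⟨k, rfl⟩ : ∃ k, n = k + 1 := ⟨n - 1, by omega⟩
        have hnat : (k + 1) * (k + 1) - (k + 1) = k * (k + 1) := by ring_nf; omega
        rw [hnat]
        push_cast
        ring
    _ = 3 := by rw [← split]; norm_num

lemma z_moment [NeZero n] (hX : Measurable X) {Y : Ω → Fin n → ℝ} (hY : Measurable Y)
    (hYsphere : ∀ᵐ ω ∂P, ∑ i, Y ω i ^ 2 = 1)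
    (hinv : ∀ A : Matrix (Fin n) (Fin n) ℝ, A * A.transpose = 1 →
      P.map (fun ω => A.mulVec (X ω)) = P.map X)
    (hindep : IndepFun X Y P) :
    ∫⁻ ω, ENNReal.ofReal ((∑ i, X ω i * Y ω i) ^ 4) ∂P
      = ∫⁻ ω, ENNReal.ofReal (X ω 0 ^ 4) ∂P := by
  haveI : IsProbabilityMeasure (P.map X) := Measure.isProbabilityMeasure_map hX.aemeasurable
  haveI : IsProbabilityMeasure (P.map Y) := Measure.isProbabilityMeasure_map hY.aemeasurable
  set g : (Fin n → ℝ) × (Fin n → ℝ) → ℝ≥0∞ :=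
    fun p => ENNReal.ofReal ((∑ i, p.1 i * p.2 i) ^ 4) with hgdef
  have hg : Measurable g := by
    apply Measurable.ennreal_ofReal
    apply Measurable.pow_const
    exact Finset.measurable_sum _ fun i _ =>
      ((measurable_pi_apply i).comp measurable_fst).mul
        ((measurable_pi_apply i).comp measurable_snd)
  have hmap : P.map (fun ω => (X ω, Y ω)) = (P.map X).prod (P.map Y) :=
    (indepFun_iff_map_prod_eq_prod_map_map hX.aemeasurable hY.aemeasurable).mp hindep
  have step1 : ∫⁻ ω, ENNReal.ofReal ((∑ i, X ω i * Y ω i) ^ 4) ∂P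
      = ∫⁻ p, g p ∂((P.map X).prod (P.map Y)) := by
    rw [← hmap, lintegral_map hg (hX.prodMk hY)]
  have step2 : ∫⁻ p, g p ∂((P.map X).prod (P.map Y))
      = ∫⁻ y, (∫⁻ x, g (x, y) ∂(P.map X)) ∂(P.map Y) :=
    lintegral_prod_symm g hg.aemeasurable
  -- for a.e. y (unit vector), the inner integral is the fourth moment
  have hYae : ∀ᵐ y ∂(P.map Y), ∑ i, y i ^ 2 = 1 := by
    have hms : MeasurableSet {v : Fin n → ℝ | ∑ i, v i ^ 2 = 1} :=
      measurableSet_eq_fun (Finset.measurable_sum _ fun i _ =>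
        (measurable_pi_apply i).pow_const 2) measurable_const
    exact (ae_map_iff hY.aemeasurable hms).mpr hYsphere
  have hinner : ∀ᵐ y ∂(P.map Y),
      (∫⁻ x, g (x, y) ∂(P.map X)) = ∫⁻ ω, ENNReal.ofReal (X ω 0 ^ 4) ∂P := by
    filter_upwards [hYae] with y hy
    obtain ⟨A, hA, hrow⟩ := exists_orthogonal {0} (fun _ => (WithLp.toLp 2 y : EuclideanSpace ℝ (Fin n)))
      (by
        intro a ha b hb
        simp only [Set.mem_singleton_iff] at ha hb
        subst ha; subst hb
        simp only [if_pos rfl]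
        calc ∑ j, y j * y j = ∑ j, y j ^ 2 := Finset.sum_congr rfl fun j _ => (sq (y j)).symm
          _ = 1 := hy)
    have hg0 : Measurable fun v : Fin n → ℝ => ENNReal.ofReal (v 0 ^ 4) :=
      ((measurable_pi_apply 0).pow_const 4).ennreal_ofReal
    have hgy : Measurable fun x : Fin n → ℝ => g (x, y) := hg.comp (measurable_id.prodMk
      measurable_const)
    calc ∫⁻ x, g (x, y) ∂(P.map X) = ∫⁻ ω, g (X ω, y) ∂P := lintegral_map hgy hX
      _ = ∫⁻ ω, ENNReal.ofReal ((A.mulVec (X ω)) 0 ^ 4) ∂P := by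
          apply lintegral_congr
          intro ω
          rw [hgdef]
          simp only
          rw [hrow 0 rfl (X ω)]
          congr 2
          exact Finset.sum_congr rfl fun j _ => mul_comm _ _
      _ = ∫⁻ ω, ENNReal.ofReal (X ω 0 ^ 4) ∂P := transfer P hX (hinv A hA) hg0
  rw [step1, step2, lintegral_congr_ae hinner]
  simp

lemma as_convergence {Ω : Type} [MeasurableSpace Ω] (P : Measure Ω) [IsProbabilityMeasure P]
    (Z : ℕ → Ω → ℝ) (hZ : ∀ n, Measurable (Z n))
    (hbound : ∀ k : ℕ, ∫⁻ ω, ENNReal.ofReal (Z k ω ^ 4) ∂P ≤ ENNReal.ofReal (12 / ((k:ℝ) + 1) ^ 2)) :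
    ∀ᵐ ω ∂P, Tendsto (fun n => Z n ω) atTop (𝓝 0) := by
  have hms : ∀ k : ℕ, Measurable fun ω => ENNReal.ofReal (Z k ω ^ 4) :=
    fun k => ((hZ k).pow_const 4).ennreal_ofReal
  have hsummable : Summable (fun k : ℕ => 12 / ((k:ℝ) + 1) ^ 2) := by
    have h : Summable (fun k : ℕ => 1 / (k:ℝ) ^ 2) :=
      Real.summable_one_div_nat_pow.mpr one_lt_two
    have h1 : Summable (fun k : ℕ => 1 / ((k:ℝ) + 1) ^ 2) := by
      have := (summable_nat_add_iff 1).mpr h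
      apply this.congr
      intro k
      push_cast
      ring
    exact (h1.mul_left 12).congr fun k => by ring
  have htsum : ∑' k, ∫⁻ ω, ENNReal.ofReal (Z k ω ^ 4) ∂P ≠ ⊤ := by
    have h1 : ∑' k, ∫⁻ ω, ENNReal.ofReal (Z k ω ^ 4) ∂P
        ≤ ∑' k : ℕ, ENNReal.ofReal (12 / ((k:ℝ) + 1) ^ 2) := ENNReal.tsum_le_tsum hbound
    have h2 : ∑' k : ℕ, ENNReal.ofReal (12 / ((k:ℝ) + 1) ^ 2)
        = ENNReal.ofReal (∑' k : ℕ, 12 / ((k:ℝ) + 1) ^ 2) :=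
      (ENNReal.ofReal_tsum_of_nonneg (fun k => by positivity) hsummable).symm
    rw [h2] at h1
    exact (h1.trans_lt ENNReal.ofReal_lt_top).ne
  have hae : ∀ᵐ ω ∂P, ∑' k, ENNReal.ofReal (Z k ω ^ 4) < ⊤ := by
    apply ae_lt_top (Measurable.ennreal_tsum hms)
    rw [lintegral_tsum fun k => (hms k).aemeasurable]
    exact htsum
  filter_upwards [hae] with ω hω
  have h1 : Tendsto (fun k => ENNReal.ofReal (Z k ω ^ 4)) atTop (𝓝 0) :=
    ENNReal.tendsto_atTop_zero_of_tsum_ne_top hω.ne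
  have h2 : Tendsto (fun k => Z k ω ^ 4) atTop (𝓝 0) := by
    have h3 := (ENNReal.tendsto_toReal (by simp : (0:ℝ≥0∞) ≠ ⊤)).comp h1
    simp only [ENNReal.toReal_zero] at h3
    apply h3.congr
    intro k
    simp only [Function.comp_apply]
    exact ENNReal.toReal_ofReal (by positivity)
  have h4 : Tendsto (fun k => |Z k ω|) atTop (𝓝 0) := by
    have h5 := h2.rpow_const (p := (1:ℝ)/4) (Or.inr (by norm_num))
    rw [Real.zero_rpow (by norm_num)] at h5
    apply h5.congr
    intro k
    have ht : Z k ω ^ 4 = |Z k ω| ^ 4 := by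
      rw [← abs_pow]
      exact (abs_of_nonneg (by positivity)).symm
    rw [ht, ← Real.rpow_natCast |Z k ω| 4, ← Real.rpow_mul (abs_nonneg _)]
    norm_num
  have hneg : Tendsto (fun k => -|Z k ω|) atTop (𝓝 0) := by
    simpa using h4.neg
  exact tendsto_of_tendsto_of_tendsto_of_le_of_le hneg h4
    (fun k => neg_abs_le _) (fun k => le_abs_self _)

end DB12

/-- if for each `n` the random vector `X_n` is uniformly distributed on the
unit sphere `S^{n−1} ⊂ ℝ^n` (its law is rotation invariant and supported on the sphere) and
`Y_n` is an independent random unit vector, then `X_nᵀ Y_n → 0` almost surely as `n → ∞`. -/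
theorem dispersion_bias_stmt12
    (Ω : Type) [MeasurableSpace Ω] (P : Measure Ω) [IsProbabilityMeasure P]
    (X Y : (n : ℕ) → Ω → Fin n → ℝ)
    (hXmeas : ∀ n, Measurable (X n)) (hYmeas : ∀ n, Measurable (Y n))
    (hXsphere : ∀ n, 1 ≤ n → ∀ᵐ ω ∂P, ∑ i, X n ω i ^ 2 = 1)
    (hXinv : ∀ n, 1 ≤ n → ∀ A : Matrix (Fin n) (Fin n) ℝ, A * A.transpose = 1 →
      P.map (fun ω => A.mulVec (X n ω)) = P.map (X n))
    (hYsphere : ∀ n, 1 ≤ n → ∀ᵐ ω ∂P, ∑ i, Y n ω i ^ 2 = 1)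
    (hindep : ∀ n, IndepFun (X n) (Y n) P) :
    ∀ᵐ ω ∂P, Tendsto (fun n => ∑ i, X n ω i * Y n ω i) atTop (𝓝 0) := by
  apply DB12.as_convergence P (fun n ω => ∑ i, X n ω i * Y n ω i)
    (fun n => Finset.measurable_sum _ fun i _ =>
      (((measurable_pi_apply i).comp (hXmeas n)).mul ((measurable_pi_apply i).comp (hYmeas n))))
  intro k
  match k with
  | 0 => simp
  | 1 =>
    haveI : NeZero 1 := ⟨one_ne_zero⟩
    have hz := DB12.z_moment P (hXmeas 1) (hYmeas 1) (hYsphere 1 le_rfl)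
      (fun A hA => hXinv 1 le_rfl A hA) (hindep 1)
    rw [hz]
    refine le_trans (DB12.fourth_le_one P (hXsphere 1 le_rfl)) ?_
    rw [← ENNReal.ofReal_one]
    apply ENNReal.ofReal_le_ofReal
    norm_num
  | (j+2) =>
    haveI : NeZero (j+2) := ⟨Nat.succ_ne_zero _⟩
    have h2 : 2 ≤ j + 2 := by omega
    have hz := DB12.z_moment P (hXmeas (j+2)) (hYmeas (j+2)) (hYsphere (j+2) (by omega))
      (fun A hA => hXinv (j+2) (by omega) A hA) (hindep (j+2))
    rw [hz]
    have hm4 := DB12.fourth_moment_eq P h2 (hXmeas (j+2)) (hXsphere (j+2) (by omega))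
      (fun A hA => hXinv (j+2) (by omega) A hA)
    have hc0 : (((j+2)*(j+2) + 2*(j+2) : ℕ) : ℝ≥0∞) ≠ 0 := by
      simp only [ne_eq, Nat.cast_eq_zero]
      omega
    have hE : ∫⁻ ω, ENNReal.ofReal (X (j+2) ω 0 ^ 4) ∂P
        = 3 / (((j+2)*(j+2) + 2*(j+2) : ℕ) : ℝ≥0∞) :=
      (ENNReal.eq_div_iff hc0 (ENNReal.natCast_ne_top _)).mpr hm4
    rw [hE]
    have hconv : (3:ℝ≥0∞) / (((j+2)*(j+2) + 2*(j+2) : ℕ) : ℝ≥0∞)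
        = ENNReal.ofReal (3 / (((j+2)*(j+2) + 2*(j+2) : ℕ) : ℝ)) := by
      rw [ENNReal.ofReal_div_of_pos (by positivity), ENNReal.ofReal_natCast]
      norm_num
    rw [hconv]
    apply ENNReal.ofReal_le_ofReal
    rw [div_le_div_iff₀ (by positivity) (by positivity)]
    push_cast
    nlinarith [sq_nonneg ((j:ℝ)+1)]
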